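/- Consequence of the classification of even root distributions: let δ : ℤ² → Fin 3 be an even abstract root distribution and d ∈ Fin 3. If there exist two distinct lattice lines in direction d on which δ never takes the value d (two parallel geodesics of rank 2 in direction d), then δ(x) ≠ d for every x ∈ ℤ², and moreover δ(x + v_d) = δ(x) for all x ∈ ℤ² (δ is a union of minimal strips of height 1 and rank 2 parallel to d). -/

import Mathlib

/-- The lattice vectors of the three simplicial directions:
`v₀ = (1,0)`, `v₁ = (0,1)`, `v₂ = (-1,1)`. -/
def dirVec : Fin 3 → ℤ × ℤ := ![(1, 0), (0, 1), (-1, 1)]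

/-- Parity of the upward face `U(p)` (corners `p`, `p+(1,0)`, `p+(0,1)`)
under the abstract root distribution `δ`. -/
def parityU (δ : ℤ × ℤ → Fin 3) (p : ℤ × ℤ) : ZMod 2 :=
  (if δ p ≠ 2 then 1 else 0) + (if δ (p.1 + 1, p.2) ≠ 1 then 1 else 0) +
    (if δ (p.1, p.2 + 1) ≠ 0 then 1 else 0)

/-- Parity of the downward face `D(p)` (corners `p+(1,0)`, `p+(0,1)`, `p+(1,1)`)
under the abstract root distribution `δ`. -/
def parityD (δ : ℤ × ℤ → Fin 3) (p : ℤ × ℤ) : ZMod 2 :=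
  (if δ (p.1 + 1, p.2) ≠ 0 then 1 else 0) + (if δ (p.1, p.2 + 1) ≠ 1 then 1 else 0) +
    (if δ (p.1 + 1, p.2 + 1) ≠ 2 then 1 else 0)

set_option linter.unnecessarySeqFocus false


section Core
variable (δ : ℤ × ℤ → Fin 3)

-- generic indicator fact
lemma indsum (a b c : Fin 3) (i j k : Fin 3)
    (h : (if a ≠ i then (1:ZMod 2) else 0) + (if b ≠ j then 1 else 0) + (if c ≠ k then 1 else 0) = 0) :
    (a = i ∧ b ≠ j ∧ c ≠ k) ∨ (a ≠ i ∧ b = j ∧ c ≠ k) ∨ (a ≠ i ∧ b ≠ j ∧ c = k)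
      ∨ (a = i ∧ b = j ∧ c = k) := by
  by_cases h1 : a = i <;> by_cases h2 : b = j <;> by_cases h3 : c = k <;>
    simp_all <;> revert h <;> decide

variable (heven : ∀ p : ℤ × ℤ, parityU δ p = 0 ∧ parityD δ p = 0)
include heven

lemma eqU (a y : ℤ) :
    (δ (a, y) = 2 ∧ δ (a+1, y) ≠ 1 ∧ δ (a, y+1) ≠ 0) ∨
    (δ (a, y) ≠ 2 ∧ δ (a+1, y) = 1 ∧ δ (a, y+1) ≠ 0) ∨
    (δ (a, y) ≠ 2 ∧ δ (a+1, y) ≠ 1 ∧ δ (a, y+1) = 0) ∨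
    (δ (a, y) = 2 ∧ δ (a+1, y) = 1 ∧ δ (a, y+1) = 0) := by
  have h := (heven (a, y)).1
  simp only [parityU] at h
  exact indsum _ _ _ _ _ _ h

lemma eqD (a y : ℤ) :
    (δ (a+1, y) = 0 ∧ δ (a, y+1) ≠ 1 ∧ δ (a+1, y+1) ≠ 2) ∨
    (δ (a+1, y) ≠ 0 ∧ δ (a, y+1) = 1 ∧ δ (a+1, y+1) ≠ 2) ∨
    (δ (a+1, y) ≠ 0 ∧ δ (a, y+1) ≠ 1 ∧ δ (a+1, y+1) = 2) ∨
    (δ (a+1, y) = 0 ∧ δ (a, y+1) = 1 ∧ δ (a+1, y+1) = 2) := by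
  have h := (heven (a, y)).2
  simp only [parityD] at h
  exact indsum _ _ _ _ _ _ h

end Core

lemma fin3_ne02 (x : Fin 3) (h0 : x ≠ 0) (h2 : x ≠ 2) : x = 1 := by omega
lemma fin3_ne01 (x : Fin 3) (h0 : x ≠ 0) (h1 : x ≠ 1) : x = 2 := by omega

section Core2
variable (δ : ℤ × ℤ → Fin 3) (heven : ∀ p : ℤ × ℤ, parityU δ p = 0 ∧ parityD δ p = 0)
include heven

-- L1: "01" pattern descends (shifted right)
lemma L1 (c y : ℤ) (h0 : δ (c, y+1) = 0) (h1 : δ (c+1, y+1) = 1) :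
    δ (c+1, y) = 0 ∧ δ (c+2, y) = 1 := by
  have hd := eqD δ heven c y
  have hu := eqU δ heven (c+1) y
  have e : c + 1 + 1 = c + 2 := by ring
  rw [e] at hu
  constructor
  · rcases hd with ⟨h,_,_⟩|⟨_,h,_⟩|⟨_,h,_⟩|⟨h,_,_⟩ <;> simp_all
  · have hc1 : δ (c+1, y) = 0 := by
      rcases hd with ⟨h,_,_⟩|⟨_,h,_⟩|⟨_,h,_⟩|⟨h,_,_⟩ <;> simp_all
    rcases hu with ⟨h,_,_⟩|⟨_,h,_⟩|⟨_,_,h⟩|⟨h,_,_⟩ <;> simp_all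

-- L2: zero with clean vertex above spawns "01"
lemma L2 (a y : ℤ) (h0 : δ (a, y) = 0) (h1 : δ (a, y+1) ≠ 0) :
    δ (a+1, y) = 1 := by
  have hu := eqU δ heven a y
  rcases hu with ⟨h,_,_⟩|⟨_,h,_⟩|⟨_,_,h⟩|⟨h,_,_⟩ <;> simp_all

-- C1a: two adjacent clean rows: lower is constant
lemma C1a (a y : ℤ) (h1 : δ (a, y) ≠ 0) (h2 : δ (a+1, y) ≠ 0) (h3 : δ (a, y+1) ≠ 0) :
    δ (a+1, y) = δ (a, y) := by
  have hu := eqU δ heven a y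
  rcases hu with ⟨h,h',_⟩|⟨h,h',_⟩|⟨_,_,h⟩|⟨_,_,h⟩
  · rw [h]; exact fin3_ne01 _ h2 h'
  · rw [h']; exact (fin3_ne02 _ h1 h).symm
  · exact absurd h h3
  · exact absurd h h3

-- C1b: two adjacent clean rows: upper is constant
lemma C1b (a y : ℤ) (h2 : δ (a+1, y) ≠ 0) (h3 : δ (a, y+1) ≠ 0) (h4 : δ (a+1, y+1) ≠ 0) :
    δ (a+1, y+1) = δ (a, y+1) := by
  have hd := eqD δ heven a y
  rcases hd with ⟨h,_,_⟩|⟨_,h,h'⟩|⟨_,h,h'⟩|⟨h,_,_⟩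
  · exact absurd h h2
  · rw [h]; exact fin3_ne02 _ h4 h'
  · rw [h']; exact (fin3_ne01 _ h3 h).symm
  · exact absurd h h2

-- C2: clean constant row → row above clean
lemma C2 (a y : ℤ) (h1 : δ (a, y) ≠ 0) (hc : δ (a+1, y) = δ (a, y)) :
    δ (a, y+1) ≠ 0 := by
  have hu := eqU δ heven a y
  rcases hu with ⟨_,_,h⟩|⟨_,_,h⟩|⟨h,h',_⟩|⟨h,h',_⟩
  · exact h
  · exact h
  · exact absurd (hc.trans (fin3_ne02 _ h1 h)) h'
  · rw [h, h'] at hc; exact absurd hc (by decide)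

-- C3: clean constant row → row below clean
lemma C3 (a y : ℤ) (h1 : δ (a, y+1) ≠ 0) (hc : δ (a+1, y+1) = δ (a, y+1)) :
    δ (a+1, y) ≠ 0 := by
  have hd := eqD δ heven a y
  rcases hd with ⟨_,h,h'⟩|⟨h,_,_⟩|⟨h,_,_⟩|⟨_,h,h'⟩
  · exact absurd (hc.trans (fin3_ne01 _ h1 h)) h'
  · exact h
  · exact h
  · rw [h, h'] at hc; exact absurd hc (by decide)

end Core2

section Core3
variable (δ : ℤ × ℤ → Fin 3) (heven : ∀ p : ℤ × ℤ, parityU δ p = 0 ∧ parityD δ p = 0)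
include heven

lemma Ldesc : ∀ (k : ℕ) (c y : ℤ), δ (c, y) = 0 → δ (c+1, y) = 1 →
    δ (c + k, y - k) = 0 := by
  intro k
  induction k with
  | zero => intro c y h0 _; simpa using h0
  | succ k ih =>
    intro c y h0 h1
    have e : y - 1 + 1 = y := by ring
    have hL := L1 δ heven c (y-1) (by rw [e]; exact h0) (by rw [e]; exact h1)
    have h2 : δ (c + 1 + 1, y - 1) = 1 := by
      have := hL.2; convert this using 2; ring
    have := ih (c+1) (y-1) hL.1 h2
    convert this using 2 <;> push_cast <;> ring

lemma twoclean : ∀ (g : ℕ) (r₁ r₂ : ℤ), (∀ a, δ (a, r₁) ≠ 0) → (∀ a, δ (a, r₂) ≠ 0) →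
    r₂ = r₁ + (g + 1 : ℕ) → ∀ a, δ (a+1, r₁) = δ (a, r₁) := by
  intro g
  induction g with
  | zero =>
    intro r₁ r₂ h1 h2 hr a
    have hr' : r₂ = r₁ + 1 := by push_cast at hr; omega
    exact C1a δ heven a r₁ (h1 a) (h1 (a+1)) (by rw [← hr']; exact h2 a)
  | succ g ih =>
    intro r₁ r₂ h1 h2 hr a
    by_cases hcl : ∀ b, δ (b, r₂ - 1) ≠ 0
    · exact ih r₁ (r₂ - 1) h1 hcl (by push_cast at hr ⊢; omega) a
    · push_neg at hcl
      obtain ⟨b, hb⟩ := hcl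
      have hup : δ (b, r₂ - 1 + 1) ≠ 0 := by
        have e : r₂ - 1 + 1 = r₂ := by ring
        rw [e]; exact h2 b
      have h01 := L2 δ heven b (r₂ - 1) hb hup
      have hdesc := Ldesc δ heven (g+1) b (r₂ - 1) hb h01
      have e2 : r₂ - 1 - (g+1 : ℕ) = r₁ := by push_cast at hr ⊢; omega
      rw [e2] at hdesc
      exact absurd hdesc (h1 _)

lemma rowsUp (y0 : ℤ) (hcl : ∀ a, δ (a, y0) ≠ 0) (hco : ∀ a, δ (a+1, y0) = δ (a, y0)) :
    ∀ k : ℕ, (∀ a, δ (a, y0 + k) ≠ 0) ∧ (∀ a, δ (a+1, y0 + k) = δ (a, y0 + k)) := by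
  intro k
  induction k with
  | zero => simpa using ⟨hcl, hco⟩
  | succ k ih =>
    have e : y0 + ((k:ℤ)+1) = (y0 + k) + 1 := by ring
    have hcl' : ∀ a, δ (a, (y0 + k) + 1) ≠ 0 :=
      fun a => C2 δ heven a (y0+k) (ih.1 a) (ih.2 a)
    refine ⟨?_, ?_⟩ <;> intro a <;> push_cast <;> rw [e]
    · exact hcl' a
    · exact C1b δ heven a (y0+k) (ih.1 (a+1)) (hcl' a) (hcl' (a+1))

lemma rowsDown (y0 : ℤ) (hcl : ∀ a, δ (a, y0) ≠ 0) (hco : ∀ a, δ (a+1, y0) = δ (a, y0)) :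
    ∀ k : ℕ, (∀ a, δ (a, y0 - k) ≠ 0) ∧ (∀ a, δ (a+1, y0 - k) = δ (a, y0 - k)) := by
  intro k
  induction k with
  | zero => simpa using ⟨hcl, hco⟩
  | succ k ih =>
    have e : y0 - ((k:ℤ)+1) = (y0 - k) - 1 := by ring
    have hcl' : ∀ a, δ (a, (y0 - k) - 1) ≠ 0 := by
      intro a
      have e2 : (y0 - k) - 1 + 1 = y0 - k := by ring
      have := C3 δ heven (a-1) ((y0-k)-1) (by rw [e2]; exact ih.1 (a-1))
        (by rw [e2]; exact ih.2 (a-1))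
      simpa using this
    refine ⟨?_, ?_⟩ <;> intro a <;> push_cast <;> rw [e]
    · exact hcl' a
    · have e2 : (y0 - k) - 1 + 1 = y0 - k := by ring
      exact C1a δ heven a ((y0-k)-1) (hcl' a) (hcl' (a+1)) (by rw [e2]; exact ih.1 a)

lemma allRows (y0 : ℤ) (hcl : ∀ a, δ (a, y0) ≠ 0) (hco : ∀ a, δ (a+1, y0) = δ (a, y0)) :
    ∀ y a, δ (a, y) ≠ 0 ∧ δ (a+1, y) = δ (a, y) := by
  intro y a
  rcases le_or_gt y0 y with h | h
  · have := rowsUp δ heven y0 hcl hco (y - y0).toNat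
    rw [show y0 + ((y - y0).toNat : ℤ) = y by omega] at this
    exact ⟨this.1 a, this.2 a⟩
  · have := rowsDown δ heven y0 hcl hco (y0 - y).toNat
    rw [show y0 - ((y0 - y).toNat : ℤ) = y by omega] at this
    exact ⟨this.1 a, this.2 a⟩

theorem core (r₁ r₂ : ℤ) (hne : r₁ ≠ r₂)
    (h1 : ∀ a, δ (a, r₁) ≠ 0) (h2 : ∀ a, δ (a, r₂) ≠ 0) :
    (∀ x : ℤ × ℤ, δ x ≠ 0) ∧ (∀ x : ℤ × ℤ, δ (x.1 + 1, x.2) = δ x) := by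
  have key : ∃ y0, (∀ a, δ (a, y0) ≠ 0) ∧ (∀ a, δ (a+1, y0) = δ (a, y0)) := by
    rcases hne.lt_or_gt with h | h
    · exact ⟨r₁, h1, twoclean δ heven (r₂ - r₁ - 1).toNat r₁ r₂ h1 h2 (by omega)⟩
    · exact ⟨r₂, h2, twoclean δ heven (r₁ - r₂ - 1).toNat r₂ r₁ h2 h1 (by omega)⟩
  obtain ⟨y0, hcl, hco⟩ := key
  have all := allRows δ heven y0 hcl hco
  constructor
  · intro x
    have := (all x.2 x.1).1
    simpa using this
  · intro x
    have := (all x.2 x.1).2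
    simpa using this

end Core3

-- Swap conjugation (for d = 1)
def swF : Fin 3 → Fin 3 := ![1, 0, 2]
def swD (δ : ℤ × ℤ → Fin 3) : ℤ × ℤ → Fin 3 := fun q => swF (δ (q.2, q.1))

lemma swi2 : ∀ a : Fin 3, ((if swF a ≠ 2 then (1:ZMod 2) else 0) = if a ≠ 2 then 1 else 0) := by decide
lemma swi1 : ∀ a : Fin 3, ((if swF a ≠ 1 then (1:ZMod 2) else 0) = if a ≠ 0 then 1 else 0) := by decide
lemma swi0 : ∀ a : Fin 3, ((if swF a ≠ 0 then (1:ZMod 2) else 0) = if a ≠ 1 then 1 else 0) := by decide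

lemma swap_evenU (δ : ℤ × ℤ → Fin 3) (p : ℤ × ℤ) :
    parityU (swD δ) p = parityU δ (p.2, p.1) := by
  unfold parityU swD
  simp only [swi2, swi1, swi0]
  ring

lemma swap_evenD (δ : ℤ × ℤ → Fin 3) (p : ℤ × ℤ) :
    parityD (swD δ) p = parityD δ (p.2, p.1) := by
  unfold parityD swD
  simp only [swi2, swi1, swi0]
  ring

-- Rotation conjugation (for d = 2)
def rotF : Fin 3 → Fin 3 := ![1, 2, 0]
def rotD (δ : ℤ × ℤ → Fin 3) : ℤ × ℤ → Fin 3 := fun q => rotF (δ (q.1 + q.2, -q.1))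

lemma roti2 : ∀ a : Fin 3, ((if rotF a ≠ 2 then (1:ZMod 2) else 0) = if a ≠ 1 then 1 else 0) := by decide
lemma roti1 : ∀ a : Fin 3, ((if rotF a ≠ 1 then (1:ZMod 2) else 0) = if a ≠ 0 then 1 else 0) := by decide
lemma roti0 : ∀ a : Fin 3, ((if rotF a ≠ 0 then (1:ZMod 2) else 0) = if a ≠ 2 then 1 else 0) := by decide

lemma rot_evenU (δ : ℤ × ℤ → Fin 3) (r : ℤ × ℤ) :
    parityU (rotD δ) r = parityD δ (r.1 + r.2, -r.1 - 1) := by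
  unfold parityU parityD rotD
  simp only [roti2, roti1, roti0]
  ring_nf

lemma rot_evenD (δ : ℤ × ℤ → Fin 3) (q : ℤ × ℤ) :
    parityD (rotD δ) q = parityU δ (q.1 + q.2 + 1, -q.1 - 1) := by
  unfold parityU parityD rotD
  simp only [roti2, roti1, roti0]
  ring_nf


/-- If an even abstract root distribution admits two distinct parallel rank-2
geodesic lattice lines in direction `d`, then `δ` never takes the value `d`
and is invariant under translation by `v_d`. -/
theorem even_with_two_parallel_rank_two_geodesics (δ : ℤ × ℤ → Fin 3)
    (heven : ∀ p : ℤ × ℤ, parityU δ p = 0 ∧ parityD δ p = 0) (d : Fin 3)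
    (x₀ y₀ : ℤ × ℤ)
    (hx : ∀ n : ℤ, δ (x₀ + n • dirVec d) ≠ d)
    (hy : ∀ n : ℤ, δ (y₀ + n • dirVec d) ≠ d)
    (hdist : ¬ ∃ n : ℤ, y₀ = x₀ + n • dirVec d) :
    (∀ x : ℤ × ℤ, δ x ≠ d) ∧ ∀ x : ℤ × ℤ, δ (x + dirVec d) = δ x := by

  have hd : d = 0 ∨ d = 1 ∨ d = 2 := by omega
  rcases hd with rfl | rfl | rfl
  · -- d = 0
    have hv : dirVec 0 = ((1:ℤ), (0:ℤ)) := rfl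
    rw [hv] at hx hy hdist ⊢
    have key : ∀ (z : ℤ × ℤ), (∀ n : ℤ, δ (z + n • ((1:ℤ),(0:ℤ))) ≠ 0) →
        ∀ a : ℤ, δ (a, z.2) ≠ 0 := by
      intro z hz a
      have h := hz (a - z.1)
      rw [show z + (a - z.1) • ((1:ℤ),(0:ℤ)) = (a, z.2) by ext <;> simp] at h
      exact h
    have h1 := key x₀ hx
    have h2 := key y₀ hy
    have hne : x₀.2 ≠ y₀.2 := by
      intro h
      exact hdist ⟨y₀.1 - x₀.1, by ext <;> simp [h]⟩
    obtain ⟨g1, g2⟩ := core δ heven x₀.2 y₀.2 hne h1 h2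
    refine ⟨g1, fun x => ?_⟩
    have h := g2 x
    rw [show x + ((1:ℤ),(0:ℤ)) = (x.1 + 1, x.2) by ext <;> simp]
    exact h
  · -- d = 1
    have hv : dirVec 1 = ((0:ℤ), (1:ℤ)) := rfl
    rw [hv] at hx hy hdist ⊢
    have hev' : ∀ p : ℤ × ℤ, parityU (swD δ) p = 0 ∧ parityD (swD δ) p = 0 := by
      intro p
      rw [swap_evenU, swap_evenD]
      exact heven _
    have key : ∀ (z : ℤ × ℤ), (∀ n : ℤ, δ (z + n • ((0:ℤ),(1:ℤ))) ≠ 1) →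
        ∀ a : ℤ, swD δ (a, z.1) ≠ 0 := by
      intro z hz a
      have h := hz (a - z.2)
      simp only [swD]
      have e : ((z.1 : ℤ), z.2 + (a - z.2)) = (z.1, a) := by ext <;> simp
      rw [show z + (a - z.2) • ((0:ℤ),(1:ℤ)) = (z.1, a) by ext <;> simp] at h
      intro hc
      exact h (by revert hc; generalize δ (z.1, a) = v; revert v; decide)
    have h1 := key x₀ hx
    have h2 := key y₀ hy
    have hne : x₀.1 ≠ y₀.1 := by
      intro h
      exact hdist ⟨y₀.2 - x₀.2, by ext <;> simp [h]⟩
    obtain ⟨g1, g2⟩ := core (swD δ) hev' x₀.1 y₀.1 hne h1 h2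
    constructor
    · intro x hc
      have := g1 (x.2, x.1)
      simp only [swD] at this
      exact this (by rw [show ((x.1 : ℤ), (x.2 : ℤ)) = x from rfl, hc]; rfl)
    · intro x
      have := g2 (x.2, x.1)
      simp only [swD] at this
      have e : x + ((0:ℤ),(1:ℤ)) = (x.1, x.2 + 1) := by ext <;> simp
      rw [e]
      have hx2 : δ (x.1, x.2 + 1) = δ (x.1, x.2) := by
        revert this
        generalize δ (x.1, x.2 + 1) = u
        generalize δ (x.1, x.2) = v
        revert u v; decide
      exact hx2
  · -- d = 2
    have hv : dirVec 2 = ((-1:ℤ), (1:ℤ)) := rfl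
    rw [hv] at hx hy hdist ⊢
    have hev' : ∀ p : ℤ × ℤ, parityU (rotD δ) p = 0 ∧ parityD (rotD δ) p = 0 := by
      intro p
      rw [rot_evenU, rot_evenD]
      exact ⟨(heven _).2, (heven _).1⟩
    have key : ∀ (z : ℤ × ℤ), (∀ n : ℤ, δ (z + n • ((-1:ℤ),(1:ℤ))) ≠ 2) →
        ∀ a : ℤ, rotD δ (a, z.1 + z.2) ≠ 0 := by
      intro z hz a
      have h := hz (-a - z.2)
      simp only [rotD]
      rw [show z + (-a - z.2) • ((-1:ℤ),(1:ℤ)) = (a + (z.1 + z.2), -a) by ext <;> simp <;> ring] at h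
      intro hc
      exact h (by revert hc; generalize δ (a + (z.1 + z.2), -a) = v; revert v; decide)
    have h1 := key x₀ hx
    have h2 := key y₀ hy
    have hne : x₀.1 + x₀.2 ≠ y₀.1 + y₀.2 := by
      intro h
      refine hdist ⟨y₀.2 - x₀.2, by ext <;> simp <;> omega⟩
    obtain ⟨g1, g2⟩ := core (rotD δ) hev' (x₀.1 + x₀.2) (y₀.1 + y₀.2) hne h1 h2
    constructor
    · intro x hc
      have := g1 (-x.2, x.1 + x.2)
      simp only [rotD] at this
      rw [show (-x.2 + (x.1 + x.2), -(-x.2)) = x by ext <;> simp <;> ring] at this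
      exact this (by rw [hc]; rfl)
    · intro x
      have := g2 (-(x.2+1), (x.1 - 1) + (x.2 + 1))
      simp only [rotD] at this
      rw [show ((-(x.2+1) : ℤ) + 1 + ((x.1-1) + (x.2+1)), -(-(x.2+1) + 1)) = (x.1, x.2) by ext <;> simp <;> ring,
          show ((-(x.2+1) : ℤ) + ((x.1-1) + (x.2+1)), -(-(x.2+1))) = (x.1 - 1, x.2 + 1) by ext <;> simp <;> ring] at this
      rw [show x + ((-1:ℤ),(1:ℤ)) = (x.1 - 1, x.2 + 1) by ext <;> simp <;> ring]
      have : δ (x.1 - 1, x.2 + 1) = δ (x.1, x.2) := by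
        revert this
        generalize δ (x.1 - 1, x.2 + 1) = u
        generalize δ (x.1, x.2) = v
        revert u v; decide
      exact this
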